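/- For every η > 0, the integral identity ∫₀¹ η / ( √t · √(1 + η²(1 − t)) ) dt = 2·arctan η holds, and consequently Θ(η,τ) → 2·arctan η as τ → 0⁺. -/

import Mathlib

open Set

/-- The arc-length integral `Θ(η,τ)` of one fundamental arc (equation (4.16)). -/
noncomputable def SerrinTheta (η τ : ℝ) : ℝ :=
  ∫ t in (0 : ℝ)..1, (η * Real.sqrt (1 + (τ ^ 2 - 1) * t)
    / Real.sqrt (1 + η ^ 2 * (1 + (τ ^ 2 - 1) * t))) / Real.sqrt (t * (1 - t))

lemma serrin_hasDerivAt (η : ℝ) (hη : 0 < η) {t : ℝ} (ht : t ∈ Set.Ioo (0:ℝ) 1) :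
    HasDerivAt (fun t =>
        2 * Real.arctan (η * Real.sqrt t / Real.sqrt (1 + η ^ 2 * (1 - t))))
      (η / (Real.sqrt t * Real.sqrt (1 + η ^ 2 * (1 - t)))) t := by
  obtain ⟨ht0, ht1⟩ := ht
  have hupos : (0:ℝ) < 1 + η ^ 2 * (1 - t) := by nlinarith
  set s := Real.sqrt t with hs
  set B := Real.sqrt (1 + η ^ 2 * (1 - t)) with hBdef
  have hBpos : 0 < B := Real.sqrt_pos.mpr hupos
  have hspos : 0 < s := Real.sqrt_pos.mpr ht0
  have hs2 : s ^ 2 = t := Real.sq_sqrt ht0.le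
  have hB2 : B ^ 2 = 1 + η ^ 2 * (1 - t) := Real.sq_sqrt hupos.le
  have hA : HasDerivAt (fun x => η * Real.sqrt x) (η * (1 / (2 * s))) t :=
    (Real.hasDerivAt_sqrt (ne_of_gt ht0)).const_mul η
  have hu : HasDerivAt (fun x : ℝ => 1 + η ^ 2 * (1 - x)) (-η ^ 2) t := by
    have h := (((hasDerivAt_id t).const_sub 1).const_mul (η ^ 2)).const_add 1
    simpa using h
  have hB : HasDerivAt (fun x => Real.sqrt (1 + η ^ 2 * (1 - x)))
      (1 / (2 * B) * (-η ^ 2)) t :=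
    (Real.hasDerivAt_sqrt (ne_of_gt hupos)).comp t hu
  have hq : HasDerivAt (fun x => η * Real.sqrt x / Real.sqrt (1 + η ^ 2 * (1 - x)))
      ((η * (1 / (2 * s)) * B - η * s * (1 / (2 * B) * (-η ^ 2))) / B ^ 2) t :=
    hA.div hB (ne_of_gt hBpos)
  have harc := (Real.hasDerivAt_arctan (η * s / B)).comp t hq
  have h2 := harc.const_mul (2 : ℝ)
  convert h2 using 1
  · rfl
  · rfl
  · rfl
  have h1q : 1 + (η * s / B) ^ 2 = (1 + η ^ 2) / B ^ 2 := by
    field_simp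
    nlinarith [hs2, hB2]
  rw [h1q]
  field_simp
  linear_combination (-1) * hB2 + (-η^2) * hs2


lemma serrin_integrand_integrable (η : ℝ) (hη : 0 < η) :
    IntervalIntegrable
      (fun t => η / (Real.sqrt t * Real.sqrt (1 + η ^ 2 * (1 - t)))) MeasureTheory.volume 0 1 := by
  have hbound : IntervalIntegrable (fun t : ℝ => η * t ^ (-(1/2) : ℝ))
      MeasureTheory.volume 0 1 :=
    (intervalIntegral.intervalIntegrable_rpow' (by norm_num)).const_mul η
  refine hbound.mono_fun ?_ ?_
  · apply Measurable.aestronglyMeasurable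
    fun_prop
  · rw [Filter.EventuallyLE, MeasureTheory.ae_restrict_iff' measurableSet_uIoc]
    filter_upwards with t ht
    rw [Set.uIoc_of_le (by norm_num : (0:ℝ) ≤ 1)] at ht
    obtain ⟨ht0, ht1⟩ := ht
    have hupos : (0:ℝ) < 1 + η ^ 2 * (1 - t) := by nlinarith
    have hB1 : (1:ℝ) ≤ Real.sqrt (1 + η ^ 2 * (1 - t)) := by
      nlinarith [Real.sq_sqrt hupos.le, Real.sqrt_nonneg (1 + η ^ 2 * (1 - t))]
    have hspos : 0 < Real.sqrt t := Real.sqrt_pos.mpr ht0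
    have h1 : η / (Real.sqrt t * Real.sqrt (1 + η ^ 2 * (1 - t))) ≤ η / Real.sqrt t := by
      apply div_le_div_of_nonneg_left hη.le hspos
      nlinarith
    have h2 : η / Real.sqrt t = η * t ^ (-(1/2) : ℝ) := by
      rw [Real.rpow_neg ht0.le, Real.sqrt_eq_rpow]
      ring
    calc ‖η / (Real.sqrt t * Real.sqrt (1 + η ^ 2 * (1 - t)))‖
        = η / (Real.sqrt t * Real.sqrt (1 + η ^ 2 * (1 - t))) := by
          rw [Real.norm_eq_abs, abs_of_nonneg]; positivity
      _ ≤ η / Real.sqrt t := h1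
      _ = η * t ^ (-(1/2) : ℝ) := h2
      _ ≤ ‖η * t ^ (-(1/2) : ℝ)‖ := le_abs_self _

/-- Equation (4.15): `∫₀¹ η/(√t·√(1+η²(1−t))) dt = 2 arctan η`, and consequently
`Θ(η,τ) → 2 arctan η` as `τ → 0⁺`. -/
theorem theta_limit_as_tau_to_zero (η : ℝ) (hη : 0 < η) :
    (∫ t in (0 : ℝ)..1, η / (Real.sqrt t * Real.sqrt (1 + η ^ 2 * (1 - t))))
      = 2 * Real.arctan η ∧
    Filter.Tendsto (fun τ => SerrinTheta η τ) (nhdsWithin 0 (Ioi 0))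
      (nhds (2 * Real.arctan η)) := by
  have heq : (∫ t in (0 : ℝ)..1, η / (Real.sqrt t * Real.sqrt (1 + η ^ 2 * (1 - t))))
      = 2 * Real.arctan η := by
    have hcont : ContinuousOn (fun t =>
        2 * Real.arctan (η * Real.sqrt t / Real.sqrt (1 + η ^ 2 * (1 - t))))
        (Set.Icc (0:ℝ) 1) := by
      apply ContinuousOn.mul continuousOn_const
      apply Real.continuous_arctan.comp_continuousOn
      apply ContinuousOn.div
      · fun_prop
      · fun_prop
      · intro t ht
        obtain ⟨ht0, ht1⟩ := ht
        have : (0:ℝ) < 1 + η ^ 2 * (1 - t) := by nlinarith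
        exact ne_of_gt (Real.sqrt_pos.mpr this)
    have := intervalIntegral.integral_eq_sub_of_hasDerivAt_of_le (by norm_num : (0:ℝ) ≤ 1)
      hcont (fun t ht => serrin_hasDerivAt η hη ht) (serrin_integrand_integrable η hη)
    rw [this]
    norm_num
  refine ⟨heq, ?_⟩
  rw [← heq]
  unfold SerrinTheta
  apply intervalIntegral.tendsto_integral_filter_of_dominated_convergence
    (bound := fun t => Real.sqrt 2 / Real.sqrt t + Real.sqrt 2 / Real.sqrt (1 - t))
  · filter_upwards with τ
    apply Measurable.aestronglyMeasurable
    fun_prop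
  · filter_upwards [Ioc_mem_nhdsGT (by norm_num : (0:ℝ) < 1)] with τ hτ
    filter_upwards with t ht
    rw [Set.uIoc_of_le (by norm_num : (0:ℝ) ≤ 1)] at ht
    obtain ⟨ht0, ht1⟩ := ht
    obtain ⟨hτ0, hτ1⟩ := hτ
    set X := 1 + (τ ^ 2 - 1) * t with hX
    have haux : 0 ≤ τ ^ 2 * t := mul_nonneg (sq_nonneg τ) ht0.le
    have haux2 : 0 ≤ (1 - τ ^ 2) * t := mul_nonneg (by nlinarith) ht0.le
    have hX0 : 0 ≤ X := by rw [hX]; nlinarith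
    have hX1 : X ≤ 1 := by rw [hX]; nlinarith
    have hDpos : (0:ℝ) < Real.sqrt (1 + η ^ 2 * X) := by
      apply Real.sqrt_pos.mpr; nlinarith
    have hfrac : η * Real.sqrt X / Real.sqrt (1 + η ^ 2 * X) ≤ 1 := by
      rw [div_le_one hDpos]
      have h1 : (η * Real.sqrt X) ^ 2 ≤ 1 + η ^ 2 * X := by
        have := Real.sq_sqrt hX0
        nlinarith
      nlinarith [Real.sqrt_nonneg X, Real.sqrt_nonneg (1 + η ^ 2 * X),
        Real.sq_sqrt (by nlinarith : (0:ℝ) ≤ 1 + η ^ 2 * X)]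
    have hfrac0 : 0 ≤ η * Real.sqrt X / Real.sqrt (1 + η ^ 2 * X) := by positivity
    have hbound_pos : 0 ≤ Real.sqrt 2 / Real.sqrt t + Real.sqrt 2 / Real.sqrt (1 - t) := by
      positivity
    rw [Real.norm_eq_abs, abs_of_nonneg (by positivity)]
    rcases eq_or_lt_of_le ht1 with h1 | h1
    · rw [← h1]
      simp only [sub_self, Real.sqrt_zero, mul_zero, div_zero]
      positivity
    · have hS : Real.sqrt (t * (1 - t)) = Real.sqrt t * Real.sqrt (1 - t) :=
        Real.sqrt_mul ht0.le _
      have hSpos : 0 < Real.sqrt t * Real.sqrt (1 - t) := by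
        apply mul_pos (Real.sqrt_pos.mpr ht0) (Real.sqrt_pos.mpr (by linarith))
      have step1 : η * Real.sqrt X / Real.sqrt (1 + η ^ 2 * X) / Real.sqrt (t * (1 - t))
          ≤ 1 / (Real.sqrt t * Real.sqrt (1 - t)) := by
        rw [hS]
        gcongr
      refine step1.trans ?_
      rcases le_or_gt t (1/2) with hhalf | hhalf
      · have h2 : Real.sqrt (1/2) ≤ Real.sqrt (1 - t) := Real.sqrt_le_sqrt (by linarith)
        have hs2pos : (0:ℝ) < Real.sqrt (1/2) := Real.sqrt_pos.mpr (by norm_num)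
        have : 1 / (Real.sqrt t * Real.sqrt (1 - t)) ≤ Real.sqrt 2 / Real.sqrt t := by
          rw [div_le_div_iff₀ hSpos (Real.sqrt_pos.mpr ht0)]
          have hsqrt2 : Real.sqrt 2 * Real.sqrt (1/2) = 1 := by
            rw [← Real.sqrt_mul (by norm_num)]
            norm_num
          calc (1:ℝ) * Real.sqrt t = Real.sqrt t * (Real.sqrt 2 * Real.sqrt (1/2)) := by
                rw [hsqrt2]; ring
            _ ≤ Real.sqrt t * (Real.sqrt 2 * Real.sqrt (1 - t)) := by
                apply mul_le_mul_of_nonneg_left _ (Real.sqrt_nonneg t)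
                exact mul_le_mul_of_nonneg_left h2 (Real.sqrt_nonneg 2)
            _ = Real.sqrt 2 * (Real.sqrt t * Real.sqrt (1 - t)) := by ring
        refine this.trans ?_
        have : (0:ℝ) ≤ Real.sqrt 2 / Real.sqrt (1 - t) := by positivity
        linarith
      · have h2 : Real.sqrt (1/2) ≤ Real.sqrt t := Real.sqrt_le_sqrt (by linarith)
        have : 1 / (Real.sqrt t * Real.sqrt (1 - t)) ≤ Real.sqrt 2 / Real.sqrt (1 - t) := by
          rw [div_le_div_iff₀ hSpos (Real.sqrt_pos.mpr (by linarith))]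
          have hsqrt2 : Real.sqrt 2 * Real.sqrt (1/2) = 1 := by
            rw [← Real.sqrt_mul (by norm_num)]
            norm_num
          calc (1:ℝ) * Real.sqrt (1 - t)
              = Real.sqrt (1 - t) * (Real.sqrt 2 * Real.sqrt (1/2)) := by
                rw [hsqrt2]; ring
            _ ≤ Real.sqrt (1 - t) * (Real.sqrt 2 * Real.sqrt t) := by
                apply mul_le_mul_of_nonneg_left _ (Real.sqrt_nonneg _)
                exact mul_le_mul_of_nonneg_left h2 (Real.sqrt_nonneg 2)
            _ = Real.sqrt 2 * (Real.sqrt t * Real.sqrt (1 - t)) := by ring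
        refine this.trans ?_
        have : (0:ℝ) ≤ Real.sqrt 2 / Real.sqrt t := by positivity
        linarith
  · have h1 : IntervalIntegrable (fun t : ℝ => Real.sqrt 2 * t ^ (-(1/2) : ℝ))
        MeasureTheory.volume 0 1 :=
      (intervalIntegral.intervalIntegrable_rpow' (by norm_num)).const_mul _
    have h2 : IntervalIntegrable (fun t : ℝ => Real.sqrt 2 * (1 - t) ^ (-(1/2) : ℝ))
        MeasureTheory.volume 0 1 := by
      have := ((intervalIntegral.intervalIntegrable_rpow' (r := (-(1/2) : ℝ)) (a := 0) (b := 1)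
        (by norm_num)).const_mul (Real.sqrt 2)).comp_sub_left 1
      simpa using this.symm
    have heq1 : ∀ t ∈ Set.Ioc (0:ℝ) 1,
        Real.sqrt 2 / Real.sqrt t + Real.sqrt 2 / Real.sqrt (1 - t)
        = Real.sqrt 2 * t ^ (-(1/2) : ℝ) + Real.sqrt 2 * (1 - t) ^ (-(1/2) : ℝ) := by
      intro t ht
      rw [Real.rpow_neg ht.1.le, Real.rpow_neg (by linarith [ht.2] : (0:ℝ) ≤ 1 - t)]
      simp only [Real.sqrt_eq_rpow]
      ring
    apply (h1.add h2).congr_ae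
    rw [Filter.EventuallyEq, MeasureTheory.ae_restrict_iff' measurableSet_uIoc]
    filter_upwards with t ht
    rw [Set.uIoc_of_le (by norm_num : (0:ℝ) ≤ 1)] at ht
    exact (heq1 t ht).symm
  · have hone : ∀ᵐ t : ℝ ∂MeasureTheory.volume, t ≠ 1 := by
      rw [MeasureTheory.ae_iff]
      simp only [not_not, Set.setOf_eq_eq_singleton]
      exact MeasureTheory.measure_singleton 1
    filter_upwards [hone] with t htne ht
    rw [Set.uIoc_of_le (by norm_num : (0:ℝ) ≤ 1)] at ht
    obtain ⟨ht0, ht1⟩ := ht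
    have ht1' : t < 1 := lt_of_le_of_ne ht1 htne
    have hkey : ∀ τ : ℝ, (η * Real.sqrt (1 + (τ ^ 2 - 1) * t)
        / Real.sqrt (1 + η ^ 2 * (1 + (τ ^ 2 - 1) * t))) / Real.sqrt (t * (1 - t))
        = (fun τ : ℝ => (η * Real.sqrt (1 + (τ ^ 2 - 1) * t)
        / Real.sqrt (1 + η ^ 2 * (1 + (τ ^ 2 - 1) * t))) / Real.sqrt (t * (1 - t))) τ :=
      fun τ => rfl
    have hcont : Filter.Tendsto (fun τ : ℝ => (η * Real.sqrt (1 + (τ ^ 2 - 1) * t)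
        / Real.sqrt (1 + η ^ 2 * (1 + (τ ^ 2 - 1) * t))) / Real.sqrt (t * (1 - t)))
        (nhdsWithin 0 (Set.Ioi 0))
        (nhds ((η * Real.sqrt (1 + ((0:ℝ) ^ 2 - 1) * t)
        / Real.sqrt (1 + η ^ 2 * (1 + ((0:ℝ) ^ 2 - 1) * t))) / Real.sqrt (t * (1 - t)))) := by
      apply Filter.Tendsto.mono_left _ nhdsWithin_le_nhds
      apply ContinuousAt.tendsto
      apply ContinuousAt.div_const
      apply ContinuousAt.div
      · fun_prop
      · fun_prop
      · have : (0:ℝ) < 1 + η ^ 2 * (1 + ((0:ℝ) ^ 2 - 1) * t) := by nlinarith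
        exact ne_of_gt (Real.sqrt_pos.mpr this)
    convert hcont using 2
    have h1t : 1 + ((0:ℝ) ^ 2 - 1) * t = 1 - t := by ring
    rw [h1t, Real.sqrt_mul ht0.le]
    have hst : 0 < Real.sqrt t := Real.sqrt_pos.mpr ht0
    have h1tpos : 0 < Real.sqrt (1 - t) := Real.sqrt_pos.mpr (by linarith)
    have hD : 0 < Real.sqrt (1 + η ^ 2 * (1 - t)) := by
      apply Real.sqrt_pos.mpr; nlinarith
    field_simp
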